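/- arXiv:1009.1755 — 6 statements merged into one kernel-verified Lean document; each statement's English description precedes it below -/
import Mathlib

section
/- Let φ be a model function (nonnegative, continuous, increasing on [0,∞), with φ(x) ≤ C·x for all x ≥ 0 and some constant C > 0). Let t be on the unit circle, K > 0, and let λ in the open unit disk satisfy φ(|t - λ|) ≤ K·(1 - |λ|). Then for every z in the closed unit disk, (1/|1 - conj(λ)·z|)·φ(|t - z·|λ||/3) ≤ 2C + K. -/
open Complex

theorem vinogradov_lemma (φ : ℝ → ℝ) (C K : ℝ) (hC : 0 < C) (hK : 0 < K)
    (hpos : ∀ x ≥ (0:ℝ), 0 ≤ φ x)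
    (hcont : ContinuousOn φ (Set.Ici 0))
    (hmono : MonotoneOn φ (Set.Ici 0))
    (hlin : ∀ x ≥ (0:ℝ), φ x ≤ C * x)
    (t l z : ℂ) (ht : ‖t‖ = 1) (hl : ‖l‖ < 1)
    (hstolz : φ (‖t - l‖) ≤ K * (1 - ‖l‖))
    (hz : ‖z‖ ≤ 1) :
    (1 / ‖1 - (starRingEnd ℂ) l * z‖) *
      φ (‖t - z * (‖l‖ : ℂ)‖ / 3) ≤ 2 * C + K := by
  set r : ℝ := ‖l‖ with hrdef
  set d : ℝ := ‖1 - (starRingEnd ℂ) l * z‖ with hddef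
  have hr0 : 0 ≤ r := norm_nonneg l
  have hr1 : r < 1 := hl
  have habs_conj : ‖(starRingEnd ℂ) l * z‖ = r * ‖z‖ := by
    rw [norm_mul, Complex.norm_conj]
  have hd1 : 1 - r ≤ d := by
    have h1 : ‖(1:ℂ)‖ - ‖(starRingEnd ℂ) l * z‖
        ≤ ‖1 - (starRingEnd ℂ) l * z‖ := by
      exact norm_sub_norm_le (1:ℂ) ((starRingEnd ℂ) l * z)
    have h2 : r * ‖z‖ ≤ r :=
      mul_le_of_le_one_right hr0 hz
    rw [habs_conj, norm_one] at h1
    linarith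
  have hd0 : 0 < d := lt_of_lt_of_le (by linarith) hd1
  -- decomposition
  have hlc : l * (starRingEnd ℂ) l = ((r^2 : ℝ) : ℂ) := by
    rw [Complex.mul_conj]; norm_cast
    exact (Complex.sq_norm l).symm
  have hdecomp : t - z * (r : ℂ) =
      (t - l) + l * (1 - (starRingEnd ℂ) l * z) + z * (((r^2 : ℝ) : ℂ) - (r : ℂ)) := by
    rw [← hlc]; ring
  have hkey : ‖t - z * (r : ℂ)‖ ≤ ‖t - l‖ + 2 * d := by
    have h1 : ‖t - z * (r : ℂ)‖ ≤
        ‖t - l‖ + ‖l * (1 - (starRingEnd ℂ) l * z)‖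
          + ‖z * (((r^2 : ℝ) : ℂ) - (r : ℂ))‖ := by
      rw [hdecomp]
      exact le_trans (norm_add_le _ _)
        (by gcongr; exact norm_add_le _ _)
    have h2 : ‖l * (1 - (starRingEnd ℂ) l * z)‖ ≤ d := by
      rw [norm_mul]
      nlinarith
    have h3 : ‖z * (((r^2 : ℝ) : ℂ) - (r : ℂ))‖ ≤ d := by
      have : (((r^2 : ℝ) : ℂ) - (r : ℂ)) = ((r^2 - r : ℝ) : ℂ) := by push_cast; ring
      rw [norm_mul, this, Complex.norm_real, Real.norm_eq_abs]
      have habs : |r^2 - r| = r - r^2 := by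
        rw [abs_sub_comm, _root_.abs_of_nonneg]; nlinarith
      rw [habs]
      have : ‖z‖ * (r - r^2) ≤ 1 * (1 - r) := by
        apply mul_le_mul hz (by nlinarith) (by nlinarith) zero_le_one
      linarith
    linarith
  set a : ℝ := ‖t - z * (r : ℂ)‖ with hadef
  have ha0 : 0 ≤ a := norm_nonneg _
  set m : ℝ := max (‖t - l‖) d with hmdef
  have hm0 : 0 ≤ m := le_trans hd0.le (le_max_right _ _)
  have ham : a / 3 ≤ m := by
    have h1 : ‖t - l‖ ≤ m := le_max_left _ _
    have h2 : d ≤ m := le_max_right _ _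
    linarith
  have hmono1 : φ (a / 3) ≤ φ m :=
    hmono (Set.mem_Ici.mpr (by positivity)) (Set.mem_Ici.mpr hm0) ham
  have hmono2 : φ m ≤ φ (‖t - l‖) + φ d := by
    rcases le_total (‖t - l‖) d with h | h
    · have : m = d := max_eq_right h
      rw [this]
      linarith [hpos (‖t - l‖) (norm_nonneg _)]
    · have : m = ‖t - l‖ := max_eq_left h
      rw [this]
      linarith [hpos d hd0.le]
  have hφd : φ d ≤ C * d := hlin d hd0.le
  have hfinal : φ (a / 3) ≤ (2 * C + K) * d := by
    have hKd : K * (1 - r) ≤ K * d := by nlinarith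
    nlinarith
  rw [one_div, inv_mul_eq_div, div_le_iff₀ hd0]
  exact hfinal
end

section
/- Let φ be a model function with constant C, let t be on the unit circle, K > 0, and suppose λ in the open unit disk satisfies φ(|t-λ|) ≤ K(1-|λ|). Then for every z in the closed unit disk, φ(|t - z·|λ||/3) ≤ (2C + K)·|1 - conj(λ)·z|. -/
open Complex

theorem vinogradov_lemma_mul (φ : ℝ → ℝ) (C K : ℝ) (hC : 0 < C) (hK : 0 < K)
    (hpos : ∀ x ≥ (0:ℝ), 0 ≤ φ x)
    (hcont : ContinuousOn φ (Set.Ici 0))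
    (hmono : MonotoneOn φ (Set.Ici 0))
    (hlin : ∀ x ≥ (0:ℝ), φ x ≤ C * x)
    (t l z : ℂ) (ht : ‖t‖ = 1) (hl : ‖l‖ < 1)
    (hstolz : φ (‖t - l‖) ≤ K * (1 - ‖l‖))
    (hz : ‖z‖ ≤ 1) :
    φ (‖t - z * (‖l‖ : ℂ)‖ / 3) ≤
      (2 * C + K) * ‖1 - (starRingEnd ℂ) l * z‖ := by
  set a := ‖l‖ with ha
  set d := ‖1 - (starRingEnd ℂ) l * z‖ with hdd
  set e := ‖t - l‖ with hee
  set s := ‖t - z * (a:ℂ)‖ with hss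
  have ha0 : 0 ≤ a := norm_nonneg l
  have hd0 : 0 ≤ d := norm_nonneg _
  have he0 : 0 ≤ e := norm_nonneg _
  have hs0 : 0 ≤ s := norm_nonneg _
  -- 1 - a ≤ d
  have hcz : ‖(starRingEnd ℂ) l * z‖ ≤ a := by
    rw [norm_mul, Complex.norm_conj]
    calc a * ‖z‖ ≤ a * 1 := mul_le_mul_of_nonneg_left hz ha0
      _ = a := mul_one a
  have h1a : 1 - a ≤ d := by
    have h := norm_sub_norm_le (1:ℂ) ((starRingEnd ℂ) l * z)
    simp only [norm_one] at h
    rw [← hdd] at h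
    linarith
  -- |l - z*a| ≤ 2d
  have hlz : ‖l - z * (a:ℂ)‖ ≤ 2 * d := by
    rcases eq_or_lt_of_le ha0 with h0 | hapos
    · have hl0 : l = 0 := by
        have := norm_eq_zero.mp h0.symm
        exact this
      simp [hl0, ← h0]
      positivity
    · have hc : l * (starRingEnd ℂ) l = ((a:ℂ))^2 := by
        rw [Complex.mul_conj, Complex.normSq_eq_norm_sq]
        norm_cast
      have key : (a:ℂ) * (l - z * (a:ℂ)) = l * ((a:ℂ) - (starRingEnd ℂ) l * z) := by
        linear_combination z * hc
      have habs : a * ‖l - z * (a:ℂ)‖ = a * ‖(a:ℂ) - (starRingEnd ℂ) l * z‖ := by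
        have := congrArg norm key
        rwa [norm_mul, norm_mul, Complex.norm_real, Real.norm_eq_abs, _root_.abs_of_nonneg ha0, ← ha] at this
      have htri : ‖(a:ℂ) - (starRingEnd ℂ) l * z‖ ≤ (1 - a) + d := by
        have h2 : ‖(a:ℂ) - (starRingEnd ℂ) l * z‖ ≤
            ‖(a:ℂ) - 1‖ + ‖1 - (starRingEnd ℂ) l * z‖ := by
          have := norm_sub_le_norm_sub_add_norm_sub ((a:ℂ)) 1 ((starRingEnd ℂ) l * z)
          exact this
        have h3 : ‖(a:ℂ) - 1‖ = 1 - a := by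
          rw [show ((a:ℂ) - 1) = ((a - 1 : ℝ) : ℂ) by push_cast; ring, Complex.norm_real, Real.norm_eq_abs,
            abs_of_nonpos (by linarith)]
          ring
        rw [h3] at h2
        exact h2
      have : a * ‖l - z * (a:ℂ)‖ ≤ a * (2 * d) := by
        rw [habs]
        have : (1 - a) + d ≤ 2 * d := by linarith
        calc a * ‖(a:ℂ) - (starRingEnd ℂ) l * z‖ ≤ a * ((1 - a) + d) :=
              mul_le_mul_of_nonneg_left htri ha0
          _ ≤ a * (2 * d) := mul_le_mul_of_nonneg_left this ha0
      exact le_of_mul_le_mul_left this hapos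
  -- s ≤ e + 2d
  have hs : s ≤ e + 2 * d := by
    have : t - z * (a:ℂ) = (t - l) + (l - z * (a:ℂ)) := by ring
    rw [hss, this]
    calc ‖(t - l) + (l - z * (a:ℂ))‖
        ≤ ‖t - l‖ + ‖l - z * (a:ℂ)‖ := norm_add_le _ _
      _ ≤ e + 2 * d := by rw [← hee]; linarith
  rcases le_or_gt e d with hed | hde
  · -- e ≤ d : s/3 ≤ d
    have hsd : s / 3 ≤ d := by linarith
    calc φ (s / 3) ≤ φ d := hmono (Set.mem_Ici.mpr (by positivity)) (Set.mem_Ici.mpr hd0) hsd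
      _ ≤ C * d := hlin d hd0
      _ ≤ (2 * C + K) * d := by nlinarith
  · -- d < e : s/3 ≤ e
    have hse : s / 3 ≤ e := by linarith
    calc φ (s / 3) ≤ φ e := hmono (Set.mem_Ici.mpr (by positivity)) (Set.mem_Ici.mpr he0) hse
      _ ≤ K * (1 - a) := hstolz
      _ ≤ K * d := mul_le_mul_of_nonneg_left h1a hK.le
      _ ≤ (2 * C + K) * d := by nlinarith
end

section
/- Let φ be a model function with constant C, t on the unit circle, K > 0, and λ in the open unit disk with φ(|t-λ|) ≤ K(1-|λ|). Then for every z in the open unit disk, φ(|t - z|/6) ≤ (2C + K)·|1 - conj(λ)·z|. -/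
open Complex

theorem vinogradov_lemma_six (φ : ℝ → ℝ) (C K : ℝ) (hC : 0 < C) (hK : 0 < K)
    (hpos : ∀ x ≥ (0:ℝ), 0 ≤ φ x)
    (hcont : ContinuousOn φ (Set.Ici 0))
    (hmono : MonotoneOn φ (Set.Ici 0))
    (hlin : ∀ x ≥ (0:ℝ), φ x ≤ C * x)
    (t l z : ℂ) (ht : ‖t‖ = 1) (hl : ‖l‖ < 1)
    (hstolz : φ (‖t - l‖) ≤ K * (1 - ‖l‖))
    (hz : ‖z‖ < 1) :
    φ (‖t - z‖ / 6) ≤ (2 * C + K) * ‖1 - (starRingEnd ℂ) l * z‖ := by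
  set D := ‖1 - (starRingEnd ℂ) l * z‖ with hD
  have hD0 : 0 ≤ D := norm_nonneg _
  -- |l - z| ≤ D
  have hlz : ‖l - z‖ ≤ D := by
    have hid : D ^ 2 - ‖l - z‖ ^ 2
        = (1 - ‖l‖ ^ 2) * (1 - ‖z‖ ^ 2) := by
      simp only [hD, Complex.sq_norm, Complex.normSq_apply, Complex.sub_re, Complex.sub_im,
        Complex.mul_re, Complex.mul_im, Complex.one_re, Complex.one_im,
        Complex.conj_re, Complex.conj_im]
      ring
    have hrhs : 0 ≤ (1 - ‖l‖ ^ 2) * (1 - ‖z‖ ^ 2) := by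
      apply mul_nonneg <;> nlinarith [norm_nonneg l, norm_nonneg z]
    nlinarith [norm_nonneg (l - z), hid, hrhs, hD0]
  -- 1 - |l| ≤ D
  have h1l : 1 - ‖l‖ ≤ D := by
    have h1 : (1:ℝ) - ‖(starRingEnd ℂ) l * z‖
        ≤ ‖1 - (starRingEnd ℂ) l * z‖ := by
      simpa using norm_sub_norm_le (1:ℂ) ((starRingEnd ℂ) l * z)
    have h2 : ‖(starRingEnd ℂ) l * z‖ ≤ ‖l‖ := by
      rw [norm_mul, Complex.norm_conj]
      nlinarith [norm_nonneg l, hz.le, norm_nonneg z]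
    linarith
  have htz0 : 0 ≤ ‖t - z‖ := norm_nonneg _
  by_cases hcase : ‖t - z‖ ≤ 12 * D
  · have h1 : φ (‖t - z‖ / 6) ≤ C * (‖t - z‖ / 6) :=
      hlin _ (by positivity)
    nlinarith
  · push_neg at hcase
    -- |t - l| ≥ |t - z| - D ≥ |t - z|/6
    have htri : ‖t - z‖ ≤ ‖t - l‖ + ‖l - z‖ := by
      have : t - z = (t - l) + (l - z) := by ring
      rw [this]; exact norm_add_le _ _
    have hkey : ‖t - z‖ / 6 ≤ ‖t - l‖ := by linarith
    have hmon := hmono (Set.mem_Ici.mpr (by positivity : (0:ℝ) ≤ ‖t - z‖ / 6))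
      (Set.mem_Ici.mpr (norm_nonneg (t - l))) hkey
    calc φ (‖t - z‖ / 6) ≤ φ (‖t - l‖) := hmon
      _ ≤ K * (1 - ‖l‖) := hstolz
      _ ≤ K * D := by nlinarith
      _ ≤ (2 * C + K) * D := by nlinarith
end

section
/- Let B be a finite Blaschke product with zeros z_1,…,z_N in the open unit disk (all nonzero), B(z) = ∏ (conj(z_n)/|z_n|)·(z_n - z)/(1 - conj(z_n)·z). Then for every z in the open unit disk, |B'(z)| ≤ Σ_{n=1}^N (1 - |z_n|²)/|1 - conj(z_n)·z|². -/
open Complex Finset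

lemma blaschke_abs_sub_le (a z : ℂ) (ha : ‖a‖ < 1) (hz : ‖z‖ < 1) :
    ‖a - z‖ ≤ ‖1 - (starRingEnd ℂ) a * z‖ := by
  have ha2 : a.re ^ 2 + a.im ^ 2 < 1 := by
    have := Complex.sq_norm a
    rw [Complex.normSq_apply] at this
    nlinarith [norm_nonneg a]
  have hz2 : z.re ^ 2 + z.im ^ 2 < 1 := by
    have := Complex.sq_norm z
    rw [Complex.normSq_apply] at this
    nlinarith [norm_nonneg z]
  have h1 : ‖a - z‖ ^ 2 ≤ ‖1 - (starRingEnd ℂ) a * z‖ ^ 2 := by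
    rw [Complex.sq_norm, Complex.sq_norm, Complex.normSq_apply, Complex.normSq_apply]
    simp only [Complex.sub_re, Complex.sub_im, Complex.mul_re, Complex.mul_im,
      Complex.conj_re, Complex.conj_im, Complex.one_re, Complex.one_im]
    nlinarith [mul_pos (by linarith : (0:ℝ) < 1 - (a.re^2+a.im^2)) (by linarith : (0:ℝ) < 1 - (z.re^2+z.im^2))]
  nlinarith [norm_nonneg (a - z), norm_nonneg (1 - (starRingEnd ℂ) a * z)]

lemma blaschke_den_ne (a z : ℂ) (ha : ‖a‖ < 1) (hz : ‖z‖ < 1) :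
    (1 - (starRingEnd ℂ) a * z) ≠ 0 := by
  intro h
  rw [sub_eq_zero] at h
  have h1 : ‖(starRingEnd ℂ) a * z‖ < 1 := by
    rw [norm_mul, Complex.norm_conj]
    nlinarith [norm_nonneg a, norm_nonneg z]
  rw [← h] at h1
  simp at h1

theorem blaschke_deriv_bound (N : ℕ) (f : ℕ → ℂ)
    (hf0 : ∀ n < N, f n ≠ 0) (hf1 : ∀ n < N, ‖f n‖ < 1)
    (z : ℂ) (hz : ‖z‖ < 1) :
    ‖deriv (fun w : ℂ => ∏ n ∈ Finset.range N,
        ((starRingEnd ℂ) (f n) / (‖f n‖ : ℂ)) *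
          ((f n - w) / (1 - (starRingEnd ℂ) (f n) * w))) z‖ ≤
      ∑ n ∈ Finset.range N,
        (1 - ‖f n‖ ^ 2) / ‖1 - (starRingEnd ℂ) (f n) * z‖ ^ 2 := by
  set g : ℕ → ℂ → ℂ := fun n w =>
    ((starRingEnd ℂ) (f n) / (‖f n‖ : ℂ)) *
      ((f n - w) / (1 - (starRingEnd ℂ) (f n) * w)) with hg
  set d : ℕ → ℂ := fun n =>
    ((starRingEnd ℂ) (f n) / (‖f n‖ : ℂ)) *
      (((starRingEnd ℂ) (f n) * f n - 1) / (1 - (starRingEnd ℂ) (f n) * z) ^ 2) with hdd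
  have habsc : ∀ n < N, ‖(starRingEnd ℂ) (f n) / (‖f n‖ : ℂ)‖ = 1 := by
    intro n hn
    rw [norm_div, Complex.norm_conj, Complex.norm_real, Real.norm_eq_abs, _root_.abs_of_nonneg (norm_nonneg _),
      div_self ((norm_ne_zero_iff.mpr (hf0 n hn)))]
  have hd : ∀ n ∈ Finset.range N, HasDerivAt (g n) (d n) z := by
    intro n hn
    rw [Finset.mem_range] at hn
    have hne := blaschke_den_ne (f n) z (hf1 n hn) hz
    have hA : HasDerivAt (fun w : ℂ => f n - w) (-1) z := by
      simpa using (hasDerivAt_id z).const_sub (f n)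
    have hB : HasDerivAt (fun w : ℂ => 1 - (starRingEnd ℂ) (f n) * w)
        (-((starRingEnd ℂ) (f n))) z := by
      simpa using ((hasDerivAt_id z).const_mul ((starRingEnd ℂ) (f n))).const_sub 1
    have h := (hA.div hB hne).const_mul
      ((starRingEnd ℂ) (f n) / (‖f n‖ : ℂ))
    convert h using 2
    congr 1
    · rfl
    · rfl
    · ring
  have hderiv : deriv (fun w : ℂ => ∏ n ∈ Finset.range N, g n w) z =
      ∑ n ∈ Finset.range N, (∏ j ∈ (Finset.range N).erase n, g j z) • d n :=
    by have := (HasDerivAt.finset_prod hd).deriv; rwa [Finset.prod_fn] at this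
  rw [hderiv]
  refine le_trans (norm_sum_le _ _) (Finset.sum_le_sum fun n hn => ?_)
  rw [Finset.mem_range] at hn
  have hne := blaschke_den_ne (f n) z (hf1 n hn) hz
  rw [smul_eq_mul, norm_mul, norm_prod]
  have hprod : ∏ j ∈ (Finset.range N).erase n, ‖g j z‖ ≤ 1 := by
    apply Finset.prod_le_one (fun j _ => norm_nonneg _)
    intro j hj
    have hjN : j < N := Finset.mem_range.mp (Finset.mem_of_mem_erase hj)
    rw [hg]
    simp only
    rw [norm_mul, habsc j hjN, one_mul, norm_div]
    exact div_le_one_of_le₀ (blaschke_abs_sub_le (f j) z (hf1 j hjN) hz)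
      (norm_nonneg _)
  have hdval : ‖d n‖ =
      (1 - ‖f n‖ ^ 2) / ‖1 - (starRingEnd ℂ) (f n) * z‖ ^ 2 := by
    rw [hdd]
    simp only
    rw [norm_mul, habsc n hn, one_mul, norm_div, norm_pow]
    congr 1
    have : (starRingEnd ℂ) (f n) * f n - 1 = ((Complex.normSq (f n) - 1 : ℝ) : ℂ) := by
      rw [mul_comm, Complex.mul_conj]
      push_cast
      ring
    rw [this, Complex.norm_real, Real.norm_eq_abs, abs_of_nonpos, ← Complex.sq_norm]
    · ring
    · have := Complex.sq_norm (f n)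
      nlinarith [hf1 n hn, norm_nonneg (f n)]
  rw [hdval]
  have hnn : (0:ℝ) ≤ (1 - ‖f n‖ ^ 2) / ‖1 - (starRingEnd ℂ) (f n) * z‖ ^ 2 := by
    apply div_nonneg
    · nlinarith [hf1 n hn, norm_nonneg (f n)]
    · positivity
  nlinarith [hprod, hnn, Finset.prod_nonneg (fun j (_ : j ∈ (Finset.range N).erase n) => norm_nonneg (g j z))]
end

section
/- Let φ be a model function with constant C, let E be a nonempty closed subset of the unit circle, and K > 0. Let z_1,…,z_N be nonzero points of the open unit disk, each lying in the Stolz region S(E,K) = { λ : |λ| < 1, φ(dist(λ,E)) ≤ K(1-|λ|) }. Let B be the finite Blaschke product with these zeros. Then for every z in the open unit disk, |B'(z)|·φ(dist(z,E)/6)² ≤ 2·(2C+K)²·Σ_{n=1}^N (1 - |z_n|). -/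
open Complex Finset

lemma normSq_blaschke_identity (a z : ℂ) :
    Complex.normSq (1 - (starRingEnd ℂ) a * z) - Complex.normSq (a - z)
      = (1 - Complex.normSq a) * (1 - Complex.normSq z) := by
  simp only [Complex.normSq_apply, Complex.sub_re, Complex.sub_im, Complex.mul_re,
    Complex.mul_im, Complex.one_re, Complex.one_im, Complex.conj_re, Complex.conj_im]
  ring

set_option maxHeartbeats 1600000 in
theorem main_theorem (φ : ℝ → ℝ) (C K : ℝ) (hC : 0 < C) (hK : 0 < K)
    (hpos : ∀ x ≥ (0:ℝ), 0 ≤ φ x)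
    (hcont : ContinuousOn φ (Set.Ici 0))
    (hmono : MonotoneOn φ (Set.Ici 0))
    (hlin : ∀ x ≥ (0:ℝ), φ x ≤ C * x)
    (E : Set ℂ) (hEne : E.Nonempty) (hEcl : IsClosed E)
    (hEcirc : ∀ t ∈ E, ‖t‖ = 1)
    (N : ℕ) (f : ℕ → ℂ)
    (hf0 : ∀ n < N, f n ≠ 0) (hf1 : ∀ n < N, ‖f n‖ < 1)
    (hfS : ∀ n < N, φ (Metric.infDist (f n) E) ≤ K * (1 - ‖f n‖))
    (z : ℂ) (hz : ‖z‖ < 1) :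
    ‖deriv (fun w : ℂ => ∏ n ∈ Finset.range N,
        ((starRingEnd ℂ) (f n) / ((‖f n‖ : ℝ) : ℂ)) *
          ((f n - w) / (1 - (starRingEnd ℂ) (f n) * w))) z‖ *
      φ (Metric.infDist z E / 6) ^ 2 ≤
      2 * (2 * C + K) ^ 2 * ∑ n ∈ Finset.range N, (1 - ‖f n‖) := by
  have hz0 : (0:ℝ) ≤ ‖z‖ := norm_nonneg z
  set d := Metric.infDist z E with hdd
  have hd0 : 0 ≤ d := Metric.infDist_nonneg
  have hφ0 : 0 ≤ φ (d / 6) := hpos _ (by positivity)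
  set c : ℕ → ℂ := fun n => (starRingEnd ℂ) (f n) / ((‖f n‖ : ℝ) : ℂ) with hc
  set D : ℕ → ℝ := fun n => ‖1 - (starRingEnd ℂ) (f n) * z‖ with hD
  -- basic facts about D
  have habs : ∀ n < N, ‖(starRingEnd ℂ) (f n) * z‖ = ‖f n‖ * ‖z‖ := by
    intro n hn; rw [norm_mul, Complex.norm_conj]
  have htri : ∀ n < N, 1 - ‖f n‖ * ‖z‖ ≤ D n := by
    intro n hn
    have h := norm_add_le (1 - (starRingEnd ℂ) (f n) * z) ((starRingEnd ℂ) (f n) * z)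
    simp only [sub_add_cancel, norm_one] at h
    rw [habs n hn] at h
    simp only [hD]; linarith
  have hD1 : ∀ n < N, 1 - ‖z‖ ≤ D n := by
    intro n hn
    have h1 : ‖f n‖ * ‖z‖ ≤ ‖z‖ := by
      nlinarith [norm_nonneg (f n), hf1 n hn]
    linarith [htri n hn]
  have hD2 : ∀ n < N, 1 - ‖f n‖ ≤ D n := by
    intro n hn
    have h1 : ‖f n‖ * ‖z‖ ≤ ‖f n‖ := by
      nlinarith [norm_nonneg (f n)]
    linarith [htri n hn]
  have hDpos : ∀ n < N, 0 < D n := fun n hn => lt_of_lt_of_le (by linarith) (hD1 n hn)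
  have hden : ∀ n < N, (1 : ℂ) - (starRingEnd ℂ) (f n) * z ≠ 0 := by
    intro n hn h
    have := hDpos n hn
    rw [hD] at this; simp only at this
    rw [h] at this; simp at this
  have hD3 : ∀ n < N, ‖f n - z‖ ≤ D n := by
    intro n hn
    have hkey := normSq_blaschke_identity (f n) z
    have h1 : Complex.normSq (f n) < 1 := by
      rw [← Complex.sq_norm]; nlinarith [norm_nonneg (f n), hf1 n hn]
    have h2 : Complex.normSq z < 1 := by
      rw [← Complex.sq_norm]; nlinarith
    have h3 : Complex.normSq (f n - z) ≤ Complex.normSq (1 - (starRingEnd ℂ) (f n) * z) := by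
      nlinarith
    rw [show D n = ‖1 - (starRingEnd ℂ) (f n) * z‖ from rfl]
    rw [Complex.norm_def, Complex.norm_def]
    exact Real.sqrt_le_sqrt h3
  have hcabs : ∀ n < N, ‖c n‖ = 1 := by
    intro n hn
    have h0 : ‖f n‖ ≠ 0 := norm_ne_zero_iff.mpr (hf0 n hn)
    simp only [hc, norm_div, Complex.norm_conj, Complex.norm_real, Real.norm_eq_abs,
      _root_.abs_of_nonneg (norm_nonneg (f n))]
    field_simp
  -- each factor bounded by 1 at z
  have hgle : ∀ m < N, ‖c m * ((f m - z) / (1 - (starRingEnd ℂ) (f m) * z))‖ ≤ 1 := by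
    intro m hm
    rw [norm_mul, hcabs m hm, one_mul, norm_div]
    exact div_le_one_of_le₀ (hD3 m hm) (le_of_lt (hDpos m hm))
  -- derivative of each factor
  set v : ℕ → ℂ := fun n => c n * (((Complex.normSq (f n) : ℂ) - 1) / (1 - (starRingEnd ℂ) (f n) * z) ^ 2) with hv
  have hder : ∀ n ∈ Finset.range N, HasDerivAt
      (fun w => c n * ((f n - w) / (1 - (starRingEnd ℂ) (f n) * w))) (v n) z := by
    intro n hn
    rw [Finset.mem_range] at hn
    have hnum : HasDerivAt (fun w : ℂ => f n - w) (-1) z := (hasDerivAt_id z).const_sub (f n)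
    have hdenf : HasDerivAt (fun w : ℂ => 1 - (starRingEnd ℂ) (f n) * w)
        (-((starRingEnd ℂ) (f n))) z := by
      simpa using ((hasDerivAt_id z).const_mul ((starRingEnd ℂ) (f n))).const_sub 1
    have hq := (hnum.div hdenf (hden n hn)).const_mul (c n)
    refine hq.congr_deriv ?_
    show c n * _ = _
    congr 1
    congr 1
    rw [← Complex.mul_conj (f n)]
    ring
  have hBder : HasDerivAt (fun w : ℂ => ∏ n ∈ Finset.range N,
      ((starRingEnd ℂ) (f n) / ((‖f n‖ : ℝ) : ℂ)) *
        ((f n - w) / (1 - (starRingEnd ℂ) (f n) * w)))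
      (∑ n ∈ Finset.range N,
        (∏ m ∈ (Finset.range N).erase n, c m * ((f m - z) / (1 - (starRingEnd ℂ) (f m) * z))) • v n)
      z := by
    refine (HasDerivAt.finset_prod hder).congr_of_eventuallyEq (Filter.Eventually.of_forall fun w => ?_)
    rw [Finset.prod_apply]
  rw [hBder.deriv]
  -- bound the derivative
  have hvd : ∀ n < N, ‖v n‖ = (1 - Complex.normSq (f n)) / (D n) ^ 2 := by
    intro n hn
    have h1 : Complex.normSq (f n) ≤ 1 := by
      rw [← Complex.sq_norm]; nlinarith [norm_nonneg (f n), hf1 n hn]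
    have : ((Complex.normSq (f n) : ℂ) - 1) = ((Complex.normSq (f n) - 1 : ℝ) : ℂ) := by
      push_cast; ring
    simp only [hv, norm_mul, hcabs n hn, one_mul, norm_div, norm_pow, this,
      Complex.norm_real, Real.norm_eq_abs, abs_of_nonpos (by linarith : Complex.normSq (f n) - 1 ≤ 0)]
    rw [neg_sub]
  have hsum : ‖∑ n ∈ Finset.range N,
      (∏ m ∈ (Finset.range N).erase n, c m * ((f m - z) / (1 - (starRingEnd ℂ) (f m) * z))) • v n‖
      ≤ ∑ n ∈ Finset.range N, (1 - Complex.normSq (f n)) / (D n) ^ 2 := by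
    refine le_trans (norm_sum_le _ _) (Finset.sum_le_sum ?_)
    intro n hn
    rw [Finset.mem_range] at hn
    rw [smul_eq_mul, norm_mul, norm_prod]
    have hprod : (∏ m ∈ (Finset.range N).erase n,
        ‖c m * ((f m - z) / (1 - (starRingEnd ℂ) (f m) * z))‖) ≤ 1 := by
      refine Finset.prod_le_one (fun m _ => norm_nonneg _) ?_
      intro m hm
      exact hgle m (Finset.mem_range.mp (Finset.mem_of_mem_erase hm))
    calc (∏ m ∈ (Finset.range N).erase n,
          ‖c m * ((f m - z) / (1 - (starRingEnd ℂ) (f m) * z))‖) * ‖v n‖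
        ≤ 1 * ‖v n‖ := by
          exact mul_le_mul_of_nonneg_right hprod (norm_nonneg _)
      _ = (1 - Complex.normSq (f n)) / (D n) ^ 2 := by rw [one_mul, hvd n hn]
  -- key Stolz bound
  have hφD : ∀ n < N, φ (d / 6) ≤ (2 * C + K) * D n := by
    intro n hn
    set dn := Metric.infDist (f n) E with hdn
    have hdn0 : 0 ≤ dn := Metric.infDist_nonneg
    have hDn0 : 0 < D n := hDpos n hn
    have hdle : d ≤ dn + D n := by
      have h1 : d ≤ dn + dist z (f n) := Metric.infDist_le_infDist_add_dist
      have h2 : dist z (f n) = ‖f n - z‖ := by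
        rw [Complex.dist_eq]; exact norm_sub_rev z (f n)
      rw [h2] at h1
      linarith [hD3 n hn]
    by_cases hcase : dn ≤ D n
    · have h1 : d / 6 ≤ D n := by linarith
      have h2 : φ (d / 6) ≤ φ (D n) := hmono (Set.mem_Ici.mpr (by positivity)) (Set.mem_Ici.mpr (le_of_lt hDn0)) h1
      have h3 : φ (D n) ≤ C * D n := hlin _ (le_of_lt hDn0)
      nlinarith
    · push_neg at hcase
      have h1 : d / 6 ≤ dn := by linarith
      have h2 : φ (d / 6) ≤ φ dn := hmono (Set.mem_Ici.mpr (by positivity)) (Set.mem_Ici.mpr hdn0) h1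
      have h3 : φ dn ≤ K * (1 - ‖f n‖) := hfS n hn
      have h4 : 1 - ‖f n‖ ≤ D n := hD2 n hn
      nlinarith
  calc ‖∑ n ∈ Finset.range N,
        (∏ m ∈ (Finset.range N).erase n, c m * ((f m - z) / (1 - (starRingEnd ℂ) (f m) * z))) • v n‖
        * φ (d / 6) ^ 2
      ≤ (∑ n ∈ Finset.range N, (1 - Complex.normSq (f n)) / (D n) ^ 2) * φ (d / 6) ^ 2 := by
        exact mul_le_mul_of_nonneg_right hsum (by positivity)
    _ = ∑ n ∈ Finset.range N, (1 - Complex.normSq (f n)) / (D n) ^ 2 * φ (d / 6) ^ 2 := by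
        rw [Finset.sum_mul]
    _ ≤ ∑ n ∈ Finset.range N, 2 * (2 * C + K) ^ 2 * (1 - ‖f n‖) := by
        refine Finset.sum_le_sum ?_
        intro n hn
        rw [Finset.mem_range] at hn
        have hDn0 : 0 < D n := hDpos n hn
        have hns : Complex.normSq (f n) = ‖f n‖ ^ 2 := (Complex.sq_norm (f n)).symm
        have h1 : 0 ≤ 1 - Complex.normSq (f n) := by
          rw [hns]; nlinarith [norm_nonneg (f n), hf1 n hn]
        have h2 : φ (d / 6) ^ 2 ≤ (2 * C + K) ^ 2 * (D n) ^ 2 := by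
          rw [← mul_pow]
          exact pow_le_pow_left₀ hφ0 (hφD n hn) 2
        have h3 : (1 - Complex.normSq (f n)) / (D n) ^ 2 * φ (d / 6) ^ 2
            ≤ (1 - Complex.normSq (f n)) / (D n) ^ 2 * ((2 * C + K) ^ 2 * (D n) ^ 2) := by
          exact mul_le_mul_of_nonneg_left h2 (by positivity)
        have h4 : (1 - Complex.normSq (f n)) / (D n) ^ 2 * ((2 * C + K) ^ 2 * (D n) ^ 2)
            = (1 - Complex.normSq (f n)) * (2 * C + K) ^ 2 := by
          field_simp
        have h5 : 1 - Complex.normSq (f n) ≤ 2 * (1 - ‖f n‖) := by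
          rw [hns]; nlinarith [norm_nonneg (f n), hf1 n hn]
        have h6 : (0:ℝ) ≤ (2 * C + K) ^ 2 := by positivity
        nlinarith
    _ = 2 * (2 * C + K) ^ 2 * ∑ n ∈ Finset.range N, (1 - ‖f n‖) := by
        rw [Finset.mul_sum]
end

section
/- For any analytic function g mapping the open unit disk into the closed unit disk (Schwarz–Pick), and any p with 0 < p < 1, the integral of |g'(z)|^p over the open unit disk with respect to Lebesgue area measure is finite; i.e., g' belongs to the Bergman space A^p. -/
open Complex MeasureTheory Set Metric Real
open scoped ENNReal NNReal Topology

/-- Layer-cake estimate: the dominating function `(3/(1-|z|))^p` has finite lintegral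
on the unit ball when `0 < p < 1`. -/
lemma finite_lintegral_aux {p : ℝ} (hp0 : 0 < p) (hp1 : p < 1) :
    ∫⁻ z in Metric.ball (0:ℂ) 1, ENNReal.ofReal ((3 / (1 - ‖z‖)) ^ p) < ∞ := by
  set μ := volume.restrict (Metric.ball (0:ℂ) 1) with hμ
  set f : ℂ → ℝ := fun z => (3 / (1 - ‖z‖)) ^ p with hfdef
  have f_nn : 0 ≤ᵐ[μ] f := by
    filter_upwards [ae_restrict_mem measurableSet_ball] with z hz
    have hz1 : ‖z‖ < 1 := by simpa [Complex.dist_eq] using hz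
    have : (0:ℝ) < 1 - ‖z‖ := by linarith
    positivity
  have f_mble : AEMeasurable f μ := by
    apply Measurable.aemeasurable
    have : f = fun z : ℂ => (3 / (1 - ‖z‖)) ^ p := by
      ext z; rw [hfdef]
    rw [this]
    fun_prop
  have key : ∀ t : ℝ, 0 < t →
      μ {a : ℂ | t ≤ f a} ≤ ENNReal.ofReal (6 * π * t ^ (-(1/p))) := by
    intro t ht
    set u : ℝ := t ^ (-(1/p)) with hu
    have hu0 : 0 < u := Real.rpow_pos_of_pos ht _
    set r₀ : ℝ := max (1 - 3 * u) 0 with hr₀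
    have hr₀0 : 0 ≤ r₀ := le_max_right _ _
    have hr₀1 : r₀ ≤ 1 := by
      rw [hr₀, max_le_iff]; constructor <;> nlinarith
    have hsub : {a : ℂ | t ≤ f a} ∩ Metric.ball (0:ℂ) 1 ⊆
        Metric.closedBall (0:ℂ) 1 \ Metric.ball (0:ℂ) r₀ := by
      rintro a ⟨ha, hab⟩
      have hab1 : ‖a‖ < 1 := by simpa [Complex.dist_eq] using hab
      have habs0 : 0 ≤ ‖a‖ := norm_nonneg a
      have hd : (0:ℝ) < 1 - ‖a‖ := by linarith
      simp only [mem_setOf_eq, hfdef] at ha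
      -- from t ≤ (3/d)^p deduce d ≤ 3 u
      have h3d : (0:ℝ) < 3 / (1 - ‖a‖) := by positivity
      have h1 : t ^ (1/p) ≤ 3 / (1 - ‖a‖) := by
        have := Real.rpow_le_rpow ht.le ha (by positivity : (0:ℝ) ≤ 1/p)
        rwa [← Real.rpow_mul h3d.le, mul_one_div_cancel hp0.ne', Real.rpow_one] at this
      have ht0 : (0:ℝ) < t ^ (1/p) := Real.rpow_pos_of_pos ht _
      have hdle : 1 - ‖a‖ ≤ 3 * u := by
        have h2 : (1 - ‖a‖) * t ^ (1/p) ≤ 3 := by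
          rw [le_div_iff₀ hd] at h1
          rw [mul_comm]; exact h1
        have hinv : u = (t ^ (1/p))⁻¹ := Real.rpow_neg ht.le _
        rw [hinv, ← div_eq_mul_inv, le_div_iff₀ ht0]
        exact h2
      constructor
      · simpa [Complex.dist_eq] using hab1.le
      · simp only [mem_ball, Complex.dist_eq, not_lt, sub_zero]
        rw [hr₀, max_le_iff]
        exact ⟨by linarith, habs0⟩
    calc μ {a : ℂ | t ≤ f a}
        = volume ({a : ℂ | t ≤ f a} ∩ Metric.ball (0:ℂ) 1) := by
          rw [hμ, Measure.restrict_apply₀']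
          exact measurableSet_ball.nullMeasurableSet
      _ ≤ volume (Metric.closedBall (0:ℂ) 1 \ Metric.ball (0:ℂ) r₀) := measure_mono hsub
      _ ≤ ENNReal.ofReal (6 * π * u) := by
          have hbsub : Metric.ball (0:ℂ) r₀ ⊆ Metric.closedBall (0:ℂ) 1 :=
            (Metric.ball_subset_closedBall).trans (Metric.closedBall_subset_closedBall hr₀1)
          rw [measure_diff hbsub measurableSet_ball.nullMeasurableSet measure_ball_lt_top.ne,
            Complex.volume_closedBall, Complex.volume_ball]
          have hπ : ((NNReal.pi : ℝ≥0∞)) = ENNReal.ofReal π := by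
            rw [← NNReal.coe_real_pi, ENNReal.ofReal_coe_nnreal]
          rw [hπ, ← ENNReal.ofReal_pow (by norm_num : (0:ℝ) ≤ 1),
            ← ENNReal.ofReal_pow hr₀0, ← ENNReal.ofReal_mul (by positivity),
            ← ENNReal.ofReal_mul (by positivity), ← ENNReal.ofReal_sub _ (by positivity)]
          apply ENNReal.ofReal_le_ofReal
          have hπ0 := Real.pi_pos
          have hπu : 0 ≤ π * u := mul_nonneg hπ0.le hu0.le
          rcases le_or_gt (1 - 3*u) 0 with hc | hc
          · have : r₀ = 0 := by rw [hr₀, max_eq_right hc]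
            rw [this]; nlinarith [mul_nonpos_of_nonneg_of_nonpos hπ0.le hc]
          · have : r₀ = 1 - 3*u := by rw [hr₀, max_eq_left hc.le]
            rw [this]; nlinarith [mul_nonneg (sq_nonneg u) hπ0.le]
  rw [show (fun z : ℂ => ENNReal.ofReal ((3 / (1 - ‖z‖)) ^ p)) = fun z => ENNReal.ofReal (f z) from rfl,
    lintegral_eq_lintegral_meas_le μ f_nn f_mble]
  calc ∫⁻ t in Ioi (0:ℝ), μ {a : ℂ | t ≤ f a}
      ≤ ∫⁻ t in Ioc (0:ℝ) 1 ∪ Ioi 1, μ {a : ℂ | t ≤ f a} :=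
        lintegral_mono_set Ioi_subset_Ioc_union_Ioi
    _ ≤ (∫⁻ t in Ioc (0:ℝ) 1, μ {a : ℂ | t ≤ f a}) + ∫⁻ t in Ioi (1:ℝ), μ {a : ℂ | t ≤ f a} :=
        lintegral_union_le _ _ _
    _ < ∞ := by
        refine ENNReal.add_lt_top.2 ⟨?_, ?_⟩
        · calc ∫⁻ t in Ioc (0:ℝ) 1, μ {a : ℂ | t ≤ f a}
              ≤ ∫⁻ _ in Ioc (0:ℝ) 1, volume (Metric.ball (0:ℂ) 1) := by
                apply setLIntegral_mono' measurableSet_Ioc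
                intro t _
                calc μ {a : ℂ | t ≤ f a} ≤ μ univ := measure_mono (subset_univ _)
                  _ = volume (Metric.ball (0:ℂ) 1) := by
                      rw [hμ, Measure.restrict_apply_univ]
            _ = volume (Metric.ball (0:ℂ) 1) * volume (Ioc (0:ℝ) 1) := setLIntegral_const _ _
            _ < ∞ := ENNReal.mul_lt_top measure_ball_lt_top (by simp)
        · calc ∫⁻ t in Ioi (1:ℝ), μ {a : ℂ | t ≤ f a}
              ≤ ∫⁻ t in Ioi (1:ℝ), ENNReal.ofReal (6 * π * t ^ (-(1/p))) := by
                apply setLIntegral_mono' measurableSet_Ioi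
                intro t ht
                exact key t (lt_trans one_pos ht)
            _ < ∞ := by
                apply IntegrableOn.setLIntegral_lt_top
                apply Integrable.const_mul
                apply integrableOn_Ioi_rpow_of_lt _ one_pos
                rw [neg_lt_neg_iff]
                rw [lt_div_iff₀ hp0, one_mul]
                exact hp1

theorem schwarz_pick_deriv_bergman (g : ℂ → ℂ)
    (hg : DifferentiableOn ℂ g (Metric.ball (0:ℂ) 1))
    (hb : ∀ z ∈ Metric.ball (0:ℂ) 1, ‖g z‖ ≤ 1)
    (p : ℝ) (hp0 : 0 < p) (hp1 : p < 1) :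
    IntegrableOn (fun z : ℂ => ‖deriv g z‖ ^ p)
      (Metric.ball (0:ℂ) 1) volume := by
  -- Cauchy-type estimate via Schwarz: |g'(z)| ≤ 3 / (1 - ‖z‖)
  have key : ∀ z ∈ Metric.ball (0:ℂ) 1, ‖deriv g z‖ ≤ 3 / (1 - ‖z‖) := by
    intro z hz
    have hz1 : ‖z‖ < 1 := by simpa [Complex.dist_eq] using hz
    set r : ℝ := 1 - ‖z‖ with hr
    have hr0 : 0 < r := by simp [hr]; linarith
    have hsub : ball z r ⊆ ball (0:ℂ) 1 := by
      intro w hw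
      rw [mem_ball, Complex.dist_eq] at hw ⊢
      calc ‖w - 0‖ = ‖(w - z) + z‖ := by rw [sub_zero]; congr 1; ring
        _ ≤ ‖w - z‖ + ‖z‖ := norm_add_le _ _
        _ < r + ‖z‖ := by linarith
        _ = 1 := by simp [hr]
    have hmaps : MapsTo g (ball z r) (ball (g z) 3) := by
      intro w hw
      rw [mem_ball, Complex.dist_eq]
      calc ‖g w - g z‖ ≤ ‖g w‖ + ‖g z‖ := by
            simpa using norm_sub_le (g w) (g z)
        _ ≤ 1 + 1 := add_le_add (hb w (hsub hw)) (hb z hz)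
        _ < 3 := by norm_num
    exact Complex.norm_deriv_le_div_of_mapsTo_ball (hg.mono hsub) (hmaps.mono_right ball_subset_closedBall) hr0
  have hderiv : ContinuousOn (deriv g) (Metric.ball (0:ℂ) 1) :=
    (hg.analyticOnNhd isOpen_ball).deriv.continuousOn
  constructor
  · apply ContinuousOn.aestronglyMeasurable ?_ measurableSet_ball
    exact (continuous_norm.comp_continuousOn hderiv).rpow_const (fun x _ => Or.inr hp0.le)
  · rw [hasFiniteIntegral_iff_norm]
    refine lt_of_le_of_lt ?_ (finite_lintegral_aux hp0 hp1)
    apply setLIntegral_mono' measurableSet_ball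
    intro z hz
    apply ENNReal.ofReal_le_ofReal
    rw [norm_of_nonneg (Real.rpow_nonneg (norm_nonneg _) _)]
    exact Real.rpow_le_rpow (norm_nonneg _) (key z hz) hp0.le
end
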